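/- Let T be a bounded operator on a Hilbert space H with orthonormal basis (e_χ)_{χ∈X₊}, and let λ : X₊ → ℂ be a map with λ(χ) ≠ 0 for all χ in some subset S ⊆ X₊ such that S_χ* T S_χ = λ(χ) T for all χ ∈ S, where each S_χ is a Fredholm isometry. If T − μ·I is Fredholm for some μ ∈ ℂ, then for every χ ∈ S the operator T − λ(χ)⁻¹ μ · I is Fredholm and ind(T − μ) = ind(T − λ(χ)⁻¹μ). -/

import Mathlib

open scoped InnerProductSpace

/-- An operator is Fredholm if it has closed range, finite-dimensional kernel
and finite-dimensional cokernel. -/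
def IsFredholm {H : Type*} [NormedAddCommGroup H] [InnerProductSpace ℂ H]
    [CompleteSpace H] (T : H →L[ℂ] H) : Prop :=
  IsClosed (LinearMap.range (T : H →ₗ[ℂ] H) : Set H) ∧
    FiniteDimensional ℂ (LinearMap.ker (T : H →ₗ[ℂ] H)) ∧
    FiniteDimensional ℂ (H ⧸ LinearMap.range (T : H →ₗ[ℂ] H))

/-- The Fredholm index. -/
noncomputable def fredholmInd {H : Type*} [NormedAddCommGroup H]
    [InnerProductSpace ℂ H] [CompleteSpace H] (T : H →L[ℂ] H) : ℤ :=
  (Module.finrank ℂ (LinearMap.ker (T : H →ₗ[ℂ] H)) : ℤ) -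
    (Module.finrank ℂ (H ⧸ LinearMap.range (T : H →ₗ[ℂ] H)) : ℤ)

section AuxiliaryLemmas

open Submodule Module

variable {K : Type*} [Field K] {U V W : Type*}
  [AddCommGroup U] [Module K U] [AddCommGroup V] [Module K V] [AddCommGroup W] [Module K W]

/-- If a submodule and its quotient are finite dimensional, so is the space. -/
theorem fd_of_sub_quot (p : Submodule K V) [FiniteDimensional K p]
    [FiniteDimensional K (V ⧸ p)] : FiniteDimensional K V := by
  obtain ⟨q, hq⟩ := p.exists_isCompl
  haveI : FiniteDimensional K q := (Submodule.quotientEquivOfIsCompl p q hq).finiteDimensional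
  exact (Submodule.prodEquivOfIsCompl p q hq).finiteDimensional

theorem ker_eq_map_of_surjective (u : U →ₗ[K] V) (h : V →ₗ[K] W)
    (hu : Function.Surjective u) :
    LinearMap.ker h = (LinearMap.ker (h ∘ₗ u)).map u := by
  ext y
  constructor
  · intro hy
    obtain ⟨x, rfl⟩ := hu y
    exact ⟨x, by simpa [LinearMap.mem_ker] using hy, rfl⟩
  · rintro ⟨x, hx, rfl⟩
    simpa [LinearMap.mem_ker] using hx

theorem finrank_map_add_inf_ker (f : V →ₗ[K] W) (N : Submodule K V)
    [FiniteDimensional K N] :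
    finrank K (N.map f) + finrank K (N ⊓ LinearMap.ker f : Submodule K V) = finrank K N := by
  let ρ : N →ₗ[K] W := f ∘ₗ N.subtype
  have hr : LinearMap.range ρ = N.map f := by
    rw [LinearMap.range_comp, Submodule.range_subtype]
  have hk : LinearMap.ker ρ = comap N.subtype (N ⊓ LinearMap.ker f) := by
    ext x
    simp [ρ, LinearMap.mem_ker, Submodule.mem_comap, x.2]
  have h := LinearMap.finrank_range_add_finrank_ker ρ
  rw [hr, hk,
    (Submodule.comapSubtypeEquivOfLe (inf_le_left : N ⊓ LinearMap.ker f ≤ N)).finrank_eq] at h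
  exact h

theorem comap_fd_finrank (f : V →ₗ[K] W) (q : Submodule K W)
    [FiniteDimensional K (LinearMap.ker f)] [FiniteDimensional K q] :
    FiniteDimensional K (q.comap f) ∧
      finrank K (q.comap f) =
        finrank K (LinearMap.ker f) + finrank K (q ⊓ LinearMap.range f : Submodule K W) := by
  have hmem : ∀ x ∈ q.comap f, f x ∈ q ⊓ LinearMap.range f := fun x hx => ⟨hx, ⟨x, rfl⟩⟩
  let φ : q.comap f →ₗ[K] (q ⊓ LinearMap.range f : Submodule K W) := f.restrict hmem
  have hle : LinearMap.ker f ≤ q.comap f := fun x hx => by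
    simp [Submodule.mem_comap, LinearMap.mem_ker.mp hx]
  have hker : LinearMap.ker φ = comap (q.comap f).subtype (LinearMap.ker f) := by
    ext x
    simp [φ, LinearMap.mem_ker, LinearMap.restrict_apply, Subtype.ext_iff, Submodule.mem_comap]
  have hsurj : Function.Surjective φ := by
    rintro ⟨y, hy⟩
    obtain ⟨hyq, x, rfl⟩ := hy
    exact ⟨⟨x, hyq⟩, Subtype.ext rfl⟩
  haveI hkfd : FiniteDimensional K (LinearMap.ker φ) := by
    rw [hker]
    exact (Submodule.comapSubtypeEquivOfLe hle).symm.finiteDimensional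
  haveI : FiniteDimensional K (q.comap f) := by
    haveI : FiniteDimensional K ((q.comap f) ⧸ LinearMap.ker φ) :=
      (LinearMap.quotKerEquivRange φ).symm.finiteDimensional
    exact fd_of_sub_quot (LinearMap.ker φ)
  refine ⟨inferInstance, ?_⟩
  have h := LinearMap.finrank_range_add_finrank_ker φ
  rw [LinearMap.range_eq_top.mpr hsurj, finrank_top, hker,
    (Submodule.comapSubtypeEquivOfLe hle).finrank_eq] at h
  omega

theorem map_mkQ_eq_bot {p q : Submodule K V} (h : q ≤ p) : q.map p.mkQ = ⊥ := by
  rw [Submodule.eq_bot_iff]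
  rintro y ⟨x, hx, rfl⟩
  simpa [Submodule.mkQ_apply, Submodule.Quotient.mk_eq_zero] using h hx

theorem map_coker_fd_finrank (g : V →ₗ[K] W) (p : Submodule K V)
    [FiniteDimensional K (V ⧸ p)] [FiniteDimensional K (W ⧸ LinearMap.range g)]
    [FiniteDimensional K (LinearMap.ker g)] :
    FiniteDimensional K (W ⧸ p.map g) ∧
      finrank K (W ⧸ p.map g) + finrank K (LinearMap.ker g) =
        finrank K (V ⧸ p) + finrank K (W ⧸ LinearMap.range g) +
          finrank K (LinearMap.ker g ⊓ p : Submodule K V) := by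
  -- finite dimensionality of the cokernel of the image
  obtain ⟨E, hE⟩ := p.exists_isCompl
  obtain ⟨F, hF⟩ := (LinearMap.range g).exists_isCompl
  haveI : FiniteDimensional K E := (Submodule.quotientEquivOfIsCompl p E hE).finiteDimensional
  haveI : FiniteDimensional K F :=
    (Submodule.quotientEquivOfIsCompl (LinearMap.range g) F hF).finiteDimensional
  have htop : p.map g ⊔ (E.map g ⊔ F) = ⊤ := by
    rw [← sup_assoc, ← Submodule.map_sup, hE.sup_eq_top, Submodule.map_top,
      LinearMap.range_eq_map] at *
    · exact hF.sup_eq_top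
  haveI hfdq : FiniteDimensional K (W ⧸ p.map g) := by
    have hq : Submodule.map (p.map g).mkQ (E.map g ⊔ F) = ⊤ := by
      have h2 := congrArg (Submodule.map (p.map g).mkQ) htop
      rwa [Submodule.map_sup, map_mkQ_eq_bot (le_refl _), bot_sup_eq, Submodule.map_top,
        Submodule.range_mkQ] at h2
    have : FiniteDimensional K (⊤ : Submodule K (W ⧸ p.map g)) := by
      rw [← hq]; infer_instance
    exact (Submodule.topEquiv (R := K) (M := W ⧸ p.map g)).finiteDimensional
  refine ⟨hfdq, ?_⟩
  -- the projection π : W⧸map g p → W⧸range g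
  let π : (W ⧸ p.map g) →ₗ[K] (W ⧸ LinearMap.range g) :=
    Submodule.mapQ _ _ LinearMap.id
      (by simpa [Submodule.comap_id] using (LinearMap.map_le_range : p.map g ≤ LinearMap.range g))
  have hπmk : π ∘ₗ (p.map g).mkQ = (LinearMap.range g).mkQ ∘ₗ LinearMap.id :=
    Submodule.mapQ_mkQ _ _ _
  have hπs : Function.Surjective π := by
    intro y
    obtain ⟨w, rfl⟩ := Submodule.mkQ_surjective _ y
    exact ⟨(p.map g).mkQ w, by simpa using LinearMap.congr_fun hπmk w⟩
  have hkπ : LinearMap.ker π = (LinearMap.range g).map (p.map g).mkQ := by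
    rw [ker_eq_map_of_surjective ((p.map g).mkQ) π (Submodule.mkQ_surjective _), hπmk,
      LinearMap.comp_id, Submodule.ker_mkQ]
  -- q1 : V⧸p → W⧸map g p
  let q1 : (V ⧸ p) →ₗ[K] (W ⧸ p.map g) :=
    Submodule.mapQ p (p.map g) g (Submodule.le_comap_map g p)
  have hq1mk : q1 ∘ₗ p.mkQ = (p.map g).mkQ ∘ₗ g := Submodule.mapQ_mkQ _ _ _
  have hrq1 : LinearMap.range q1 = (LinearMap.range g).map (p.map g).mkQ := by
    rw [← LinearMap.range_comp_of_range_eq_top q1 (Submodule.range_mkQ p), hq1mk,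
      LinearMap.range_comp]
  have hkq1 : LinearMap.ker q1 = (LinearMap.ker g).map p.mkQ := by
    rw [ker_eq_map_of_surjective p.mkQ q1 (Submodule.mkQ_surjective _), hq1mk,
      LinearMap.ker_comp, Submodule.ker_mkQ, Submodule.comap_map_eq, Submodule.map_sup,
      map_mkQ_eq_bot (le_refl p), bot_sup_eq]
  -- rank–nullity bookkeeping
  have h1 := LinearMap.finrank_range_add_finrank_ker π
  rw [LinearMap.range_eq_top.mpr hπs, finrank_top, hkπ] at h1
  have h2 := LinearMap.finrank_range_add_finrank_ker q1
  rw [hrq1, hkq1] at h2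
  have h3 := finrank_map_add_inf_ker p.mkQ (LinearMap.ker g)
  rw [Submodule.ker_mkQ] at h3
  omega

theorem comp_fred (f : U →ₗ[K] V) (g : V →ₗ[K] W)
    [FiniteDimensional K (LinearMap.ker f)] [FiniteDimensional K (LinearMap.ker g)]
    [FiniteDimensional K (V ⧸ LinearMap.range f)] [FiniteDimensional K (W ⧸ LinearMap.range g)] :
    FiniteDimensional K (LinearMap.ker (g ∘ₗ f)) ∧
      FiniteDimensional K (W ⧸ LinearMap.range (g ∘ₗ f)) ∧
      (finrank K (LinearMap.ker (g ∘ₗ f)) : ℤ) - finrank K (W ⧸ LinearMap.range (g ∘ₗ f)) =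
        ((finrank K (LinearMap.ker f) : ℤ) - finrank K (V ⧸ LinearMap.range f)) +
          ((finrank K (LinearMap.ker g) : ℤ) - finrank K (W ⧸ LinearMap.range g)) := by
  obtain ⟨hfd1, he1⟩ := comap_fd_finrank f (LinearMap.ker g)
  obtain ⟨hfd2, he2⟩ := map_coker_fd_finrank g (LinearMap.range f)
  have hk : LinearMap.ker (g ∘ₗ f) = (LinearMap.ker g).comap f := LinearMap.ker_comp f g
  have hr : LinearMap.range (g ∘ₗ f) = (LinearMap.range f).map g := LinearMap.range_comp f g
  refine ⟨hk ▸ hfd1, hr ▸ hfd2, ?_⟩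
  rw [hk, hr, he1]
  have : LinearMap.ker g ⊓ LinearMap.range f = LinearMap.ker g ⊓ LinearMap.range f := rfl
  omega

end AuxiliaryLemmas

theorem isClosed_range_of_fd_coker {H : Type*} [NormedAddCommGroup H] [InnerProductSpace ℂ H]
    [CompleteSpace H] (f : H →L[ℂ] H)
    (hfd : FiniteDimensional ℂ (H ⧸ LinearMap.range (f : H →ₗ[ℂ] H))) :
    IsClosed (LinearMap.range (f : H →ₗ[ℂ] H) : Set H) := by
  haveI := hfd
  haveI : CompleteSpace (LinearMap.ker (f : H →ₗ[ℂ] H)) := (ContinuousLinearMap.isClosed_ker f).completeSpace_coe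
  set N := (LinearMap.ker (f : H →ₗ[ℂ] H))ᗮ with hN
  have hk : IsCompl (LinearMap.ker (f : H →ₗ[ℂ] H)) N := Submodule.isCompl_orthogonal_of_hasOrthogonalProjection
  haveI : CompleteSpace N := (Submodule.isClosed_orthogonal _).completeSpace_coe
  let f1 : N →L[ℂ] H := f.comp N.subtypeL
  have hr1 : LinearMap.range (f1 : N →ₗ[ℂ] H) = LinearMap.range (f : H →ₗ[ℂ] H) := by
    apply le_antisymm
    · rintro y ⟨x, rfl⟩
      exact ⟨x, rfl⟩
    · rintro y ⟨x, rfl⟩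
      have hx : x ∈ LinearMap.ker (f : H →ₗ[ℂ] H) ⊔ N := by rw [hk.sup_eq_top]; trivial
      obtain ⟨a, ha, b, hb, rfl⟩ := Submodule.mem_sup.mp hx
      refine ⟨⟨b, hb⟩, ?_⟩
      simp [f1, map_add, LinearMap.mem_ker.mp ha]
  have hker1 : LinearMap.ker (f1 : N →ₗ[ℂ] H) = ⊥ := by
    rw [Submodule.eq_bot_iff]
    rintro x hx
    have hmem : (x : H) ∈ LinearMap.ker (f : H →ₗ[ℂ] H) ⊓ N := ⟨by simpa [f1] using hx, x.2⟩
    rw [hk.inf_eq_bot] at hmem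
    exact Subtype.ext (by simpa using hmem)
  obtain ⟨G, hG⟩ := (LinearMap.range (f1 : N →ₗ[ℂ] H)).exists_isCompl
  haveI : FiniteDimensional ℂ (H ⧸ LinearMap.range (f1 : N →ₗ[ℂ] H)) := by rw [hr1]; exact hfd
  haveI : FiniteDimensional ℂ G :=
    (Submodule.quotientEquivOfIsCompl (LinearMap.range (f1 : N →ₗ[ℂ] H)) G hG).finiteDimensional
  have := f1.closed_complemented_range_of_isCompl_of_ker_eq_bot G hG
    (Submodule.closed_of_finiteDimensional G) hker1
  rwa [hr1] at this

open Submodule Module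

/-- If the shift isometries `S_χ` (`χ` in a subset `Q` of the cone)
are Fredholm, `λ(χ) ≠ 0` on `Q`, and `S_χ* T S_χ = λ(χ) T` on `Q`, then
Fredholmness of `T − μ` implies Fredholmness of `T − λ(χ)⁻¹μ` with the same index. -/
theorem lambda_toeplitz_index_rotation_invariance
    {X : Type*} [CommMonoid X] (P : Submonoid X)
    {H : Type*} [NormedAddCommGroup H] [InnerProductSpace ℂ H] [CompleteSpace H]
    (e : HilbertBasis P ℂ H)
    (S : P → H →L[ℂ] H)
    (hS : ∀ χ ξ : P, S χ (e ξ) = e (χ * ξ))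
    (hiso : ∀ χ : P, ∀ x : H, ‖S χ x‖ = ‖x‖)
    (Q : Set P)
    (lam : P → ℂ) (hlam : ∀ χ ∈ Q, lam χ ≠ 0)
    (hSF : ∀ χ ∈ Q, IsFredholm (S χ))
    (T : H →L[ℂ] H)
    (hint : ∀ χ ∈ Q, ContinuousLinearMap.adjoint (S χ) ∘L T ∘L S χ = lam χ • T)
    (μ : ℂ) (hμ : IsFredholm (T - μ • 1)) :
    ∀ χ ∈ Q, IsFredholm (T - ((lam χ)⁻¹ * μ) • 1) ∧
      fredholmInd (T - μ • 1) = fredholmInd (T - ((lam χ)⁻¹ * μ) • 1) := by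
  intro χ hχ
  set s : H →L[ℂ] H := S χ with hs
  set s' : H →L[ℂ] H := ContinuousLinearMap.adjoint (S χ) with hs'
  have hlamχ : lam χ ≠ 0 := hlam χ hχ
  set A : H →L[ℂ] H := T - μ • 1 with hA
  set B : H →L[ℂ] H := T - ((lam χ)⁻¹ * μ) • 1 with hB
  -- s' ∘ s = 1
  have hss : s' ∘L s = 1 := (ContinuousLinearMap.norm_map_iff_adjoint_comp_self s).mp (hiso χ)
  have hssx : ∀ x : H, s' (s x) = x := fun x => by
    have := congrArg (fun (f : H →L[ℂ] H) => f x) hss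
    simpa using this
  -- the key intertwining identity
  have hC : s' ∘L (A ∘L s) = lam χ • B := by
    have h1 : ∀ x, s' (T (s x)) = lam χ • T x := fun x => by
      have := congrArg (fun (f : H →L[ℂ] H) => f x) (hint χ hχ)
      simpa using this
    ext x
    simp only [ContinuousLinearMap.comp_apply, hA, hB, ContinuousLinearMap.sub_apply,
      ContinuousLinearMap.smul_apply, ContinuousLinearMap.one_apply, map_sub, map_smul,
      h1, hssx, smul_sub, smul_smul, mul_inv_cancel_left₀ hlamχ]
  -- relate kernels and ranges of B with those of the composition
  have hkerBC : LinearMap.ker ((s' ∘L (A ∘L s) : H →L[ℂ] H) : H →ₗ[ℂ] H) = LinearMap.ker (B : H →ₗ[ℂ] H) := by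
    rw [hC]
    ext x
    simp [LinearMap.mem_ker, smul_eq_zero, hlamχ]
  have hranBC : LinearMap.range ((s' ∘L (A ∘L s) : H →L[ℂ] H) : H →ₗ[ℂ] H) = LinearMap.range (B : H →ₗ[ℂ] H) := by
    rw [hC]
    ext y
    simp only [LinearMap.mem_range, ContinuousLinearMap.smul_apply]
    constructor
    · rintro ⟨x, rfl⟩
      exact ⟨lam χ • x, by rw [map_smul]; rfl⟩
    · rintro ⟨x, rfl⟩
      exact ⟨(lam χ)⁻¹ • x, by rw [map_smul, ContinuousLinearMap.coe_smul, LinearMap.smul_apply, smul_smul, inv_mul_cancel₀ hlamχ, one_smul]⟩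

  -- data for s
  obtain ⟨hsclosed, -, hscoker⟩ := hSF χ hχ
  have hkers : LinearMap.ker (s : H →ₗ[ℂ] H) = ⊥ := by
    rw [LinearMap.ker_eq_bot, ContinuousLinearMap.coe_coe]
    intro x y hxy
    have h0 : ‖x - y‖ = 0 := by rw [← hiso χ (x - y), map_sub, hxy, sub_self, norm_zero]
    simpa [sub_eq_zero] using norm_eq_zero.mp h0
  haveI hfk_s : FiniteDimensional ℂ (LinearMap.ker (s : H →ₗ[ℂ] H)) := by rw [hkers]; infer_instance
  have hz_s : Module.finrank ℂ (LinearMap.ker (s : H →ₗ[ℂ] H)) = 0 := by rw [hkers]; exact finrank_bot ℂ H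
  haveI hfc_s : FiniteDimensional ℂ (H ⧸ LinearMap.range (s : H →ₗ[ℂ] H)) := hscoker
  -- data for s'
  haveI : CompleteSpace (LinearMap.range (s : H →ₗ[ℂ] H)) := hsclosed.completeSpace_coe
  have hcompl : IsCompl (LinearMap.range (s : H →ₗ[ℂ] H)) (LinearMap.range (s : H →ₗ[ℂ] H))ᗮ :=
    Submodule.isCompl_orthogonal_of_hasOrthogonalProjection
  have hadj : ∀ a b : H, ⟪s' a, b⟫_ℂ = ⟪a, s b⟫_ℂ := fun a b =>
    ContinuousLinearMap.adjoint_inner_left s b a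
  have hkers' : LinearMap.ker (s' : H →ₗ[ℂ] H) = (LinearMap.range (s : H →ₗ[ℂ] H))ᗮ := by
    ext x
    simp only [LinearMap.mem_ker, Submodule.mem_orthogonal, ContinuousLinearMap.coe_coe]
    constructor
    · intro hx u hu
      obtain ⟨y, rfl⟩ := hu
      have h2 : ⟪x, s y⟫_ℂ = 0 := by rw [← hadj, hx, inner_zero_left]
      simpa using congrArg (starRingEnd ℂ) h2
    · intro hx
      apply ext_inner_right ℂ
      intro v
      rw [hadj, inner_zero_left]
      have h3 : ⟪s v, x⟫_ℂ = 0 := hx (s v) ⟨v, rfl⟩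
      simpa using congrArg (starRingEnd ℂ) h3
  haveI hfk_s' : FiniteDimensional ℂ (LinearMap.ker (s' : H →ₗ[ℂ] H)) := by
    rw [hkers']
    exact (Submodule.quotientEquivOfIsCompl _ _ hcompl).finiteDimensional
  have hdim_s' : Module.finrank ℂ (LinearMap.ker (s' : H →ₗ[ℂ] H)) = Module.finrank ℂ (H ⧸ LinearMap.range (s : H →ₗ[ℂ] H)) := by
    rw [hkers']
    exact (Submodule.quotientEquivOfIsCompl _ _ hcompl).finrank_eq.symm
  have hrans' : LinearMap.range (s' : H →ₗ[ℂ] H) = ⊤ := LinearMap.range_eq_top.mpr fun y => ⟨s y, hssx y⟩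
  haveI hsub : Subsingleton (H ⧸ LinearMap.range (s' : H →ₗ[ℂ] H)) := by
    rw [hrans']
    exact Submodule.Quotient.subsingleton_iff.mpr rfl
  haveI hfc_s' : FiniteDimensional ℂ (H ⧸ LinearMap.range (s' : H →ₗ[ℂ] H)) := inferInstance
  have hdimc_s' : Module.finrank ℂ (H ⧸ LinearMap.range (s' : H →ₗ[ℂ] H)) = 0 :=
    Module.finrank_zero_of_subsingleton
  -- data for A
  obtain ⟨-, hAk, hAc⟩ := hμ
  haveI := hAk
  haveI := hAc
  -- first composition : A ∘ s  (as linear maps)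
  haveI : FiniteDimensional ℂ (LinearMap.ker (↑s : H →ₗ[ℂ] H)) := hfk_s
  haveI : FiniteDimensional ℂ (H ⧸ LinearMap.range (↑s : H →ₗ[ℂ] H)) := hfc_s
  haveI : FiniteDimensional ℂ (LinearMap.ker (↑A : H →ₗ[ℂ] H)) := hAk
  haveI : FiniteDimensional ℂ (H ⧸ LinearMap.range (↑A : H →ₗ[ℂ] H)) := hAc
  obtain ⟨hfd1, hfd2, hind1⟩ := comp_fred (↑s : H →ₗ[ℂ] H) (↑A : H →ₗ[ℂ] H)
  -- second composition : s' ∘ (A ∘ s)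
  haveI := hfd1
  haveI := hfd2
  haveI : FiniteDimensional ℂ (LinearMap.ker (↑s' : H →ₗ[ℂ] H)) := hfk_s'
  haveI : FiniteDimensional ℂ (H ⧸ LinearMap.range (↑s' : H →ₗ[ℂ] H)) := hfc_s'
  obtain ⟨hfd3, hfd4, hind2⟩ :=
    comp_fred ((↑A : H →ₗ[ℂ] H) ∘ₗ (↑s : H →ₗ[ℂ] H)) (↑s' : H →ₗ[ℂ] H)
  -- transport to B
  have hkerB : LinearMap.ker ((↑s' : H →ₗ[ℂ] H) ∘ₗ ((↑A : H →ₗ[ℂ] H) ∘ₗ (↑s : H →ₗ[ℂ] H)))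
      = LinearMap.ker (B : H →ₗ[ℂ] H) := hkerBC
  have hranB : LinearMap.range ((↑s' : H →ₗ[ℂ] H) ∘ₗ ((↑A : H →ₗ[ℂ] H) ∘ₗ (↑s : H →ₗ[ℂ] H)))
      = LinearMap.range (B : H →ₗ[ℂ] H) := hranBC
  haveI hKB : FiniteDimensional ℂ (LinearMap.ker (B : H →ₗ[ℂ] H)) := by rw [← hkerB]; exact hfd3
  haveI hCB : FiniteDimensional ℂ (H ⧸ LinearMap.range (B : H →ₗ[ℂ] H)) := by rw [← hranB]; exact hfd4
  refine ⟨⟨isClosed_range_of_fd_coker B hCB, hKB, hCB⟩, ?_⟩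
  -- index equality
  show (Module.finrank ℂ (LinearMap.ker (A : H →ₗ[ℂ] H)) : ℤ) - Module.finrank ℂ (H ⧸ LinearMap.range (A : H →ₗ[ℂ] H))
      = (Module.finrank ℂ (LinearMap.ker (B : H →ₗ[ℂ] H)) : ℤ) - Module.finrank ℂ (H ⧸ LinearMap.range (B : H →ₗ[ℂ] H))
  have eB1 : Module.finrank ℂ (LinearMap.ker (B : H →ₗ[ℂ] H)) = Module.finrank ℂ
      (LinearMap.ker ((↑s' : H →ₗ[ℂ] H) ∘ₗ ((↑A : H →ₗ[ℂ] H) ∘ₗ (↑s : H →ₗ[ℂ] H)))) := by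
    rw [hkerB]
  have eB2 : Module.finrank ℂ (H ⧸ LinearMap.range (B : H →ₗ[ℂ] H)) = Module.finrank ℂ
      (H ⧸ LinearMap.range ((↑s' : H →ₗ[ℂ] H) ∘ₗ ((↑A : H →ₗ[ℂ] H) ∘ₗ (↑s : H →ₗ[ℂ] H)))) := by
    rw [hranB]
  have eA1 : Module.finrank ℂ (LinearMap.ker (A : H →ₗ[ℂ] H))
      = Module.finrank ℂ (LinearMap.ker (↑A : H →ₗ[ℂ] H)) := rfl
  have eA2 : Module.finrank ℂ (H ⧸ LinearMap.range (A : H →ₗ[ℂ] H))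
      = Module.finrank ℂ (H ⧸ LinearMap.range (↑A : H →ₗ[ℂ] H)) := rfl
  have es1 : Module.finrank ℂ (LinearMap.ker (↑s : H →ₗ[ℂ] H)) = 0 := hz_s
  have es2 : Module.finrank ℂ (LinearMap.ker (↑s' : H →ₗ[ℂ] H))
      = Module.finrank ℂ (H ⧸ LinearMap.range (↑s : H →ₗ[ℂ] H)) := hdim_s'
  have es3 : Module.finrank ℂ (H ⧸ LinearMap.range (↑s' : H →ₗ[ℂ] H)) = 0 := hdimc_s'
  rw [eA1, eA2, eB1, eB2]
  omega
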